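/- Let A₁ ↪ A₂ ↠ A₃ be a short exact sequence of abelian groups, R₂ an A₂-torsor, and τ : R₂ ∧_{A₂} A₃ → A₃ a trivialization of the contracted A₃-torsor. Then R₁ := { r ∈ R₂ : τ([r, 1]) = 1 } is an A₁-torsor (the A₁-action is inherited from A₂ via α), and the contraction R₁ ∧_{A₁} A₂ is canonically isomorphic to R₂ as an A₂-torsor. -/
import Mathlib


/-- The contraction relation: for an `A₂`-set `R₂` and a homomorphism
`β : A₂ →* A₃`, the contraction `R₂ ∧_{A₂} A₃` is the quotient of `R₂ × A₃`
by the relation `(a • r, c) ∼ (r, β a * c)`. -/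
def contrRel {A₂ A₃ R₂ : Type} [CommGroup A₂] [CommGroup A₃] [MulAction A₂ R₂]
    (β : A₂ →* A₃) : (R₂ × A₃) → (R₂ × A₃) → Prop :=
  fun p q => ∃ a : A₂, p.1 = a • q.1 ∧ q.2 = β a * p.2

/-- Given a short exact sequence `A₁ ↪ A₂ ↠ A₃`, an `A₂`-torsor `R₂`, and a
trivialization `τ` of the contraction `R₂ ∧_{A₂} A₃`, the set
`R₁ = {r : τ[(r,1)] = 1}` is an `A₁`-torsor (acting through `α`), and the
contraction `R₁ ∧_{A₁} A₂` is canonically isomorphic to `R₂` via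
`(r, b) ↦ b • r`. -/
theorem stmt16 {A₁ A₂ A₃ R₂ : Type} [CommGroup A₁] [CommGroup A₂] [CommGroup A₃]
    [MulAction A₂ R₂] (α : A₁ →* A₂) (β : A₂ →* A₃)
    (hα : Function.Injective α) (hβ : Function.Surjective β)
    (hexact : ∀ b : A₂, β b = 1 ↔ ∃ a : A₁, α a = b)
    (hne : Nonempty R₂)
    (htorsor : ∀ r r' : R₂, ∃! b : A₂, r' = b • r)
    (τ : Quot (contrRel (R₂ := R₂) β) → A₃)
    (hbij : Function.Bijective τ)
    (heq : ∀ (r : R₂) (c c' : A₃),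
      τ (Quot.mk _ (r, c * c')) = c * τ (Quot.mk _ (r, c'))) :
    -- `R₁` is stable under the `A₁`-action through `α`
    (∀ (a : A₁) (r : R₂), τ (Quot.mk _ (r, 1)) = 1 →
      τ (Quot.mk _ (α a • r, 1)) = 1) ∧
    -- `R₁` is nonempty
    (∃ r : R₂, τ (Quot.mk _ (r, 1)) = 1) ∧
    -- `A₁` acts simply transitively on `R₁`
    (∀ r r' : R₂, τ (Quot.mk _ (r, 1)) = 1 → τ (Quot.mk _ (r', 1)) = 1 →
      ∃! a : A₁, r' = α a • r) ∧
    -- the canonical map `R₁ ∧_{A₁} A₂ → R₂`, `(r,b) ↦ b • r`, is surjective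
    (∀ r' : R₂, ∃ (r : R₂) (b : A₂), τ (Quot.mk _ (r, 1)) = 1 ∧ r' = b • r) ∧
    -- and injective on the contraction: its fibers are the contraction classes
    (∀ (r r' : R₂) (b b' : A₂),
      τ (Quot.mk _ (r, 1)) = 1 → τ (Quot.mk _ (r', 1)) = 1 →
      b • r = b' • r' → ∃ a : A₁, r' = α a • r ∧ b = b' * α a) := by
  have key : ∀ (a : A₂) (r : R₂),
      τ (Quot.mk _ (a • r, (1 : A₃))) = β a * τ (Quot.mk _ (r, (1 : A₃))) := by
    intro a r
    have h1 : Quot.mk (contrRel (R₂ := R₂) β) (a • r, (1 : A₃))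
        = Quot.mk _ (r, β a * 1) := by
      apply Quot.sound
      exact ⟨a, rfl, rfl⟩
    rw [h1, heq]
  refine ⟨?_, ?_, ?_, ?_, ?_⟩
  · intro a r hr
    rw [key, hr, mul_one]
    exact (hexact (α a)).mpr ⟨a, rfl⟩
  · obtain ⟨r₀⟩ := hne
    obtain ⟨b, hb⟩ := hβ (τ (Quot.mk _ (r₀, (1 : A₃))))⁻¹
    exact ⟨b • r₀, by rw [key, hb, inv_mul_cancel]⟩
  · intro r r' hr hr'
    obtain ⟨b, hb, hbu⟩ := htorsor r r'
    have hβb : β b = 1 := by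
      have := key b r
      rw [← hb, hr, hr', mul_one] at this
      exact this.symm
    obtain ⟨a, ha⟩ := (hexact b).mp hβb
    refine ⟨a, by show r' = α a • r; rw [ha]; exact hb, ?_⟩
    intro a' ha'
    exact hα (by rw [ha]; exact hbu (α a') ha')
  · intro r'
    obtain ⟨r₀⟩ := hne
    obtain ⟨b, hb⟩ := hβ (τ (Quot.mk _ (r₀, (1 : A₃))))⁻¹
    have hr : τ (Quot.mk _ ((b • r₀ : R₂), (1 : A₃))) = 1 := by
      rw [key, hb, inv_mul_cancel]
    obtain ⟨c, hc, _⟩ := htorsor (b • r₀) r'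
    exact ⟨b • r₀, c, hr, hc⟩
  · intro r r' b b' hr hr' hbb
    have hr'eq : r' = (b'⁻¹ * b) • r := by
      rw [mul_smul, hbb, ← mul_smul, inv_mul_cancel, one_smul]
    have hβ1 : β (b'⁻¹ * b) = 1 := by
      have := key (b'⁻¹ * b) r
      rw [← hr'eq, hr, hr', mul_one] at this
      exact this.symm
    obtain ⟨a, ha⟩ := (hexact _).mp hβ1
    refine ⟨a, by rw [ha]; exact hr'eq, ?_⟩
    rw [ha]
    group
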